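/- Let 0 < α < 1, let v_1, …, v_n ∈ R^d be unit vectors with ⟨v_i, v_j⟩ = ±α for all i ≠ j, and let G be the graph on {1, …, n} with an edge ij whenever ⟨v_i, v_j⟩ = −α. Set λ = (1−α)/(2α). Then n ≤ d + mult(λ, G) + 1, where mult(λ, G) is the multiplicity of λ as an eigenvalue of the adjacency matrix of G (zero if λ is not an eigenvalue). -/

import Mathlib

set_option maxHeartbeats 1000000


open scoped RealInnerProductSpace

open Matrix

attribute [local instance] Classical.propDecidable

/-- The adjacency matrix of a finite simple graph, with real entries. -/
noncomputable def adjMat {V : Type*} [Fintype V] (G : SimpleGraph V) : Matrix V V ℝ :=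
  Matrix.of fun a b => if G.Adj a b then 1 else 0

lemma adjMat_isHermitian {V : Type*} [Fintype V] (G : SimpleGraph V) :
    (adjMat G).IsHermitian := by
  show (adjMat G)ᴴ = adjMat G
  ext i j
  simp only [adjMat, Matrix.conjTranspose_apply, Matrix.of_apply, star_trivial]
  rw [SimpleGraph.adj_comm]

/-- The `k`-th largest eigenvalue (`1`-indexed, counted with multiplicity) of the
adjacency matrix of a finite simple graph. -/
noncomputable def graphEigNth {V : Type*} [Fintype V] (G : SimpleGraph V) (k : ℕ) : ℝ :=
  ((Finset.univ.val.map (adjMat_isHermitian G).eigenvalues).sort (· ≤ ·)).getD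
    (Fintype.card V - k) 0

/-- The multiplicity of `μ` as an eigenvalue of the adjacency matrix of a finite simple
graph (zero if `μ` is not an eigenvalue). -/
noncomputable def graphEigMult {V : Type*} [Fintype V] (G : SimpleGraph V) (μ : ℝ) : ℕ :=
  Nat.card {i : V // (adjMat_isHermitian G).eigenvalues i = μ}

/-- The coordinate-sum linear functional on Euclidean space. -/
noncomputable def sumLin (n : ℕ) : EuclideanSpace ℝ (Fin n) →ₗ[ℝ] ℝ where
  toFun x := ∑ i, x i
  map_add' x y := by simp [Finset.sum_add_distrib]
  map_smul' c x := by simp [Finset.mul_sum]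

/-- The diagonalization property of the matrix eigenvector basis, coordinate form. -/
lemma repr_toEuclideanLin_apply {n : ℕ} {A : Matrix (Fin n) (Fin n) ℝ}
    (hA : A.IsHermitian) (y : EuclideanSpace ℝ (Fin n)) (j : Fin n) :
    hA.eigenvectorBasis.repr (Matrix.toEuclideanLin A y) j
      = hA.eigenvalues j * hA.eigenvectorBasis.repr y j := by
  have h := (Matrix.isHermitian_iff_isSymmetric.1 hA).eigenvectorBasis_apply_self_apply
    finrank_euclideanSpace y ((Fintype.equivOfCardEq (Fintype.card_fin _)).symm j)
  simpa [Matrix.IsHermitian.eigenvectorBasis, Matrix.IsHermitian.eigenvalues,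
    Matrix.IsHermitian.eigenvalues₀, OrthonormalBasis.repr_reindex] using h

/-- **Rank–nullity bound.** Let `0 < α < 1`, let `v 1, …, v n` be unit vectors in `ℝ^d`
with pairwise inner products `±α`, and let `G` be the graph on `{1, …, n}` with an edge
`ij` exactly when `⟪v i, v j⟫ = −α`. Then `n ≤ d + mult(λ, G) + 1` where
`λ = (1−α)/(2α)`. -/
theorem equiangular_rank_nullity_bound (α : ℝ) (hα0 : 0 < α) (hα1 : α < 1)
    (n d : ℕ) (v : Fin n → EuclideanSpace ℝ (Fin d))
    (hunit : ∀ i, ‖v i‖ = 1)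
    (hangle : ∀ i j, i ≠ j → ⟪v i, v j⟫ = α ∨ ⟪v i, v j⟫ = -α)
    (G : SimpleGraph (Fin n))
    (hG : ∀ i j, G.Adj i j ↔ i ≠ j ∧ ⟪v i, v j⟫ = -α) :
    n ≤ d + graphEigMult G ((1 - α) / (2 * α)) + 1 := by
  classical
  set lam : ℝ := (1 - α) / (2 * α) with hlamdef
  have hA := adjMat_isHermitian G
  set A : Matrix (Fin n) (Fin n) ℝ := adjMat G with hAdef
  set B := hA.eigenvectorBasis with hBdef
  set μ := hA.eigenvalues with hμdef
  set M : Matrix (Fin n) (Fin n) ℝ := Matrix.of (fun i j => ⟪v i, v j⟫) with hMdef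
  -- entries of M
  have hM : ∀ i j, M i j = if i = j then 1 else (if G.Adj i j then -α else α) := by
    intro i j
    have hMij : M i j = ⟪v i, v j⟫ := rfl
    by_cases h : i = j
    · subst h
      rw [hMij, if_pos rfl, real_inner_self_eq_norm_sq, hunit i]; norm_num
    · rw [hMij, if_neg h]
      by_cases hadj : G.Adj i j
      · rw [if_pos hadj]; exact ((hG i j).1 hadj).2
      · rw [if_neg hadj]
        exact (hangle i j h).resolve_right fun hc => hadj ((hG i j).2 ⟨h, hc⟩)
  -- matrix decomposition
  have hMmat : M = (1 - α) • (1 : Matrix (Fin n) (Fin n) ℝ)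
      + (-(2 * α)) • A + α • (Matrix.of fun _ _ => (1 : ℝ)) := by
    ext i j
    by_cases h : i = j
    · subst h
      have hirr : ¬ G.Adj i i := G.irrefl
      simp [hM, hAdef, adjMat, hirr, Matrix.one_apply]
    · by_cases hadj : G.Adj i j
      · simp [hM, h, hadj, hAdef, adjMat, Matrix.one_apply]
        ring
      · simp [hM, h, hadj, hAdef, adjMat, Matrix.one_apply]
  -- rank bound
  have hrank : M.rank ≤ d := by
    have hfac : M = (Matrix.of fun (k : Fin d) (i : Fin n) => v i k)ᵀ
        * (Matrix.of fun (k : Fin d) (i : Fin n) => v i k) := by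
      ext i j
      simp [hMdef, Matrix.mul_apply, PiLp.inner_apply, RCLike.inner_apply, starRingEnd_apply]
      exact Finset.sum_congr rfl (fun _ _ => mul_comm _ _)
    calc M.rank ≤ (Matrix.of fun (k : Fin d) (i : Fin n) => v i k).rank := by
          rw [hfac]; exact Matrix.rank_mul_le_right _ _
      _ ≤ Fintype.card (Fin d) := Matrix.rank_le_card_height _
      _ = d := Fintype.card_fin d
  -- rank-nullity
  have hrn : M.rank + Module.finrank ℝ (LinearMap.ker (Matrix.toEuclideanLin M)) = n := by
    have h1 : M.rank = Module.finrank ℝ (LinearMap.range (Matrix.toEuclideanLin M)) := by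
      rw [Matrix.rank_eq_finrank_range_toLin M (PiLp.basisFun 2 ℝ (Fin n))
        (PiLp.basisFun 2 ℝ (Fin n))]
      rfl
    rw [h1, LinearMap.finrank_range_add_finrank_ker, finrank_euclideanSpace, Fintype.card_fin]
  -- sum functional restricted to the kernel
  set K := LinearMap.ker (Matrix.toEuclideanLin M) with hKdef
  set σ : K →ₗ[ℝ] ℝ := (sumLin n).comp K.subtype with hσdef
  have hker : Module.finrank ℝ K
      = Module.finrank ℝ (LinearMap.ker σ) + Module.finrank ℝ (LinearMap.range σ) := by
    rw [add_comm, LinearMap.finrank_range_add_finrank_ker]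
  have hrange1 : Module.finrank ℝ (LinearMap.range σ) ≤ 1 := by
    simpa using (LinearMap.range σ).finrank_le
  -- kernel of σ injects into the λ-eigencoordinates
  have hkerσ : Module.finrank ℝ (LinearMap.ker σ) ≤ graphEigMult G lam := by
    let ψ : LinearMap.ker σ →ₗ[ℝ] ({j : Fin n // μ j = lam} → ℝ) :=
      (LinearMap.pi fun j : {j : Fin n // μ j = lam} =>
        (EuclideanSpace.proj j.1 : EuclideanSpace ℝ (Fin n) →L[ℝ] ℝ).toLinearMap.comp
          B.repr.toLinearMap).comp (K.subtype.comp (LinearMap.ker σ).subtype)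
    have hψinj : Function.Injective ψ := by
      rw [← LinearMap.ker_eq_bot, LinearMap.ker_eq_bot']
      rintro ⟨⟨x, hxK⟩, hxs⟩ hz
      have hzj : ∀ j : {j : Fin n // μ j = lam}, B.repr x j.1 = 0 := by
        intro j
        have := congrFun hz j
        simpa [ψ] using this
      have hsum0 : ∑ i, x i = 0 := hxs
      -- A acts as lam on x
      have hx0 : Matrix.toEuclideanLin M x = 0 := hxK
      have heig : Matrix.toEuclideanLin A x = lam • x := by
        have hMx : M *ᵥ (WithLp.equiv 2 (Fin n → ℝ) x) = 0 := by
          have := congrArg (WithLp.equiv 2 (Fin n → ℝ)) hx0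
          simpa [Matrix.toEuclideanLin_apply] using this
        set xf : Fin n → ℝ := WithLp.equiv 2 (Fin n → ℝ) x with hxfdef
        have hones : (Matrix.of fun _ _ => (1 : ℝ) : Matrix (Fin n) (Fin n) ℝ) *ᵥ xf
            = fun _ => ∑ i, xf i := by
          funext k
          simp [Matrix.mulVec, dotProduct]
        have hsum0' : ∑ i, xf i = 0 := hsum0
        have hexp : (1 - α) • xf + (-(2 * α)) • (A *ᵥ xf) = 0 := by
          have h0 := hMx
          rw [hMmat] at h0
          rw [Matrix.add_mulVec, Matrix.add_mulVec, Matrix.smul_mulVec,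
            Matrix.smul_mulVec, Matrix.smul_mulVec, Matrix.one_mulVec,
            hones] at h0
          have hz1 : α • (fun _ : Fin n => ∑ i, xf i) = (0 : Fin n → ℝ) := by
            funext k; simp [hsum0']
          rw [hz1, add_zero] at h0
          exact h0
        have h2α : (2 * α) ≠ 0 := by positivity
        have hAx : A *ᵥ xf = lam • xf := by
          have h1 : (2 * α) • (A *ᵥ xf) = (1 - α) • xf := by
            have h2 := hexp
            rw [neg_smul, add_neg_eq_zero] at h2
            exact h2.symm
          have h3 := congrArg (fun w => (2 * α)⁻¹ • w) h1
          simp only [smul_smul, inv_mul_cancel₀ h2α, one_smul] at h3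
          rw [h3, hlamdef]
          congr 1
          rw [inv_mul_eq_div]
        have h4 : Matrix.toEuclideanLin A x
            = (WithLp.equiv 2 (Fin n → ℝ)).symm ((lam • xf)) := by
          rw [Matrix.toEuclideanLin_apply]
          change WithLp.toLp 2 (A *ᵥ xf) = _
          rw [hAx]
          rfl
        rw [h4]
        rfl
      -- all coordinates vanish
      have hrep : ∀ j, B.repr x j = 0 := by
        intro j
        by_cases hj : μ j = lam
        · exact hzj ⟨j, hj⟩
        · have h1 := repr_toEuclideanLin_apply hA x j
          rw [heig, _root_.map_smul] at h1
          have h2 : lam * B.repr x j = μ j * B.repr x j := by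
            simpa [smul_eq_mul] using h1
          have h3 : (μ j - lam) * B.repr x j = 0 := by linear_combination -h2
          exact (mul_eq_zero.1 h3).resolve_left (sub_ne_zero.2 hj)
      have hx0' : x = 0 := by
        apply B.repr.map_eq_zero_iff.mp
        ext j; exact hrep j
      apply Subtype.ext
      apply Subtype.ext
      exact hx0'
    have hle := LinearMap.finrank_le_finrank_of_injective hψinj
    calc Module.finrank ℝ (LinearMap.ker σ)
        ≤ Module.finrank ℝ ({j : Fin n // μ j = lam} → ℝ) := hle
      _ = Fintype.card {j : Fin n // μ j = lam} := Module.finrank_pi ℝ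
      _ = Nat.card {j : Fin n // μ j = lam} := (Nat.card_eq_fintype_card).symm
      _ = graphEigMult G lam := rfl
  omega
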